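/- In the free group F₂ with generating set S_γ, for every g ∈ F₂ with g ≠ 1 and every s ∈ S_γ: either |sg| = |g| − 1 or |sg| = |g| + 1, and |sg| = |g| − 1 holds if and only if there exists a geodesic spelling of g beginning with s⁻¹. Similarly, either |gs| = |g| − 1 or |gs| = |g| + 1, and |gs| = |g| − 1 holds if and only if there exists a geodesic spelling of g ending with s⁻¹. -/

import Mathlib

section Defs

variable {G : Type*} [Group G]

/-- Word length with respect to a generating set `S`: the least `n` such that `g`
is a product of `n` elements of `S`. -/
noncomputable def wlen (S : Set G) (g : G) : ℕ :=
  sInf {n | ∃ l : List G, (∀ x ∈ l, x ∈ S) ∧ l.length = n ∧ l.prod = g}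

/-- Word metric: `d(g,h) = |h⁻¹ g|`. -/
noncomputable def wdist (S : Set G) (x y : G) : ℝ := wlen S (y⁻¹ * x)

/-- Gromov product `(x,y)_w = ½ (d(x,w) + d(w,y) − d(x,y))`. -/
noncomputable def gp (S : Set G) (x y w : G) : ℝ :=
  (wdist S x w + wdist S w y - wdist S x y) / 2

/-- The word metric is `δ`-hyperbolic (Gromov's four-point condition). -/
def IsDeltaHyperbolic (S : Set G) (δ : ℝ) : Prop :=
  ∀ x y z w : G, gp S x y w ≥ min (gp S x z w) (gp S y z w) - δ

/-- A group is virtually cyclic if it has a cyclic subgroup of finite index. -/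
def VirtuallyCyclic (G : Type*) [Group G] : Prop :=
  ∃ H : Subgroup G, IsCyclic H ∧ H.FiniteIndex

/-- `GenCon(g)`: the average word length of the conjugates of `g`
by the generators in `S`. -/
noncomputable def genCon (S : Set G) (g : G) : ℝ :=
  (∑ᶠ s ∈ S, (wlen S (s⁻¹ * g * s) : ℝ)) / S.ncard

/-- Conjugation curvature `κ(g) = (|g| − GenCon(g)) / |g|`. -/
noncomputable def kappa (S : Set G) (g : G) : ℝ :=
  ((wlen S g : ℝ) - genCon S g) / (wlen S g)

/-- `k`-spherical conjugation curvature
`κ_k(g) = (|g| − (1/#S_k) Σ_{s ∈ S_k} d(gs,s)) / |g|`; note `d(gs,s) = |s⁻¹ g s|`. -/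
noncomputable def kappaK (S : Set G) (k : ℕ) (g : G) : ℝ :=
  ((wlen S g : ℝ) -
      (∑ᶠ s ∈ {x : G | wlen S x = k}, (wlen S (s⁻¹ * g * s) : ℝ)) /
        ({x : G | wlen S x = k} : Set G).ncard) / (wlen S g)

end Defs

/-- The free group of rank 2. -/
abbrev F2 := FreeGroup Bool

namespace F2Gen

/-- The generator `a`. -/
def a : F2 := FreeGroup.of true

/-- The generator `b`. -/
def b : F2 := FreeGroup.of false

end F2Gen

open F2Gen

/-- The word `w = ababa`. -/
def wγ : F2 := a * b * a * b * a

/-- The generating set `S_γ = {a, a⁻¹, b, b⁻¹, w, w⁻¹}` of `F₂`. -/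
def Sγ : Set F2 := {a, a⁻¹, b, b⁻¹, wγ, wγ⁻¹}


section AuxLemmas

lemma inv_mem_Sγ {s : F2} (hs : s ∈ Sγ) : s⁻¹ ∈ Sγ := by
  rcases hs with h|h|h|h|h|h <;> subst h <;>
    simp [Sγ, Set.mem_insert_iff, inv_inv]

lemma exists_spelling (g : F2) : ∃ l : List F2, (∀ x ∈ l, x ∈ Sγ) ∧ l.prod = g := by
  induction g using FreeGroup.induction_on with
  | C1 => exact ⟨[], by simp, by simp⟩
  | of x =>
    cases x
    · exact ⟨[b], by simp [Sγ], by simp only [List.prod_singleton]; rfl⟩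
    · exact ⟨[a], by simp [Sγ], by simp only [List.prod_singleton]; rfl⟩
  | inv_of x _ =>
    cases x
    · exact ⟨[b⁻¹], by simp [Sγ], by simp only [List.prod_singleton]; rfl⟩
    · exact ⟨[a⁻¹], by simp [Sγ], by simp only [List.prod_singleton]; rfl⟩
  | mul x y hx hy =>
    obtain ⟨l1, h1, h1'⟩ := hx
    obtain ⟨l2, h2, h2'⟩ := hy
    refine ⟨l1 ++ l2, ?_, by simp [h1', h2']⟩
    intro x hx
    rcases List.mem_append.1 hx with h|h
    exacts [h1 x h, h2 x h]

lemma wlen_le {g : F2} {l : List F2} (hl : ∀ x ∈ l, x ∈ Sγ) (hp : l.prod = g) :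
    wlen Sγ g ≤ l.length := Nat.sInf_le ⟨l, hl, rfl, hp⟩

lemma exists_geodesic (g : F2) :
    ∃ l : List F2, (∀ x ∈ l, x ∈ Sγ) ∧ l.length = wlen Sγ g ∧ l.prod = g := by
  obtain ⟨l, hl, hp⟩ := exists_spelling g
  exact Nat.sInf_mem (⟨l.length, l, hl, rfl, hp⟩ :
    Set.Nonempty {n | ∃ l : List F2, (∀ x ∈ l, x ∈ Sγ) ∧ l.length = n ∧ l.prod = g})

/-- The mod-2 length homomorphism. -/
def φmod2 : F2 →* Multiplicative (ZMod 2) :=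
  FreeGroup.lift (fun _ => Multiplicative.ofAdd 1)

lemma φmod2_Sγ {s : F2} (hs : s ∈ Sγ) : φmod2 s = Multiplicative.ofAdd 1 := by
  rcases hs with h|h|h|h|h|h <;> subst h <;>
    simp only [φmod2, a, b, wγ, map_mul, map_inv, FreeGroup.lift_apply_of] <;> decide

lemma φmod2_spelling : ∀ l : List F2, (∀ x ∈ l, x ∈ Sγ) →
    φmod2 l.prod = Multiplicative.ofAdd (l.length : ZMod 2) := by
  intro l
  induction l with
  | nil => intro _; simp
  | cons x t ih =>
    intro h
    have hx := φmod2_Sγ (h x List.mem_cons_self)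
    have ht := ih (fun y hy => h y (List.mem_cons_of_mem x hy))
    simp only [List.prod_cons, map_mul, hx, ht, List.length_cons]
    rw [← ofAdd_add]
    congr 1
    push_cast
    ring

lemma φmod2_wlen (g : F2) : φmod2 g = Multiplicative.ofAdd ((wlen Sγ g : ZMod 2)) := by
  obtain ⟨l, hl, hlen, hp⟩ := exists_geodesic g
  have := φmod2_spelling l hl
  rw [hp, hlen] at this
  exact this

lemma wlen_ne_of_mul {s g : F2} (hs : s ∈ Sγ) : wlen Sγ (s * g) ≠ wlen Sγ g := by
  intro h
  have h1 := φmod2_wlen (s * g)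
  rw [map_mul, φmod2_Sγ hs, φmod2_wlen g, h, ← ofAdd_add] at h1
  have h2 : (1 : ZMod 2) + (wlen Sγ g : ZMod 2) = 0 + (wlen Sγ g : ZMod 2) := by
    rw [zero_add]; exact Multiplicative.ofAdd.injective h1
  exact one_ne_zero (add_right_cancel h2)

lemma wlen_ne_of_mul_right {s g : F2} (hs : s ∈ Sγ) : wlen Sγ (g * s) ≠ wlen Sγ g := by
  intro h
  have h1 := φmod2_wlen (g * s)
  rw [map_mul, φmod2_Sγ hs, φmod2_wlen g, h, ← ofAdd_add] at h1
  have h2 : (wlen Sγ g : ZMod 2) + 1 = (wlen Sγ g : ZMod 2) + 0 := by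
    rw [add_zero]; exact Multiplicative.ofAdd.injective h1
  exact one_ne_zero (add_left_cancel h2)

lemma wlen_mul_le {s : F2} (hs : s ∈ Sγ) (g : F2) : wlen Sγ (s * g) ≤ wlen Sγ g + 1 := by
  obtain ⟨l, hl, hlen, hp⟩ := exists_geodesic g
  have := wlen_le (g := s * g) (l := s :: l)
    (by intro x hx; rcases List.mem_cons.1 hx with h|h; exacts [h ▸ hs, hl x h])
    (by simp [hp])
  simpa [hlen] using this

lemma wlen_mul_le_right {s : F2} (hs : s ∈ Sγ) (g : F2) : wlen Sγ (g * s) ≤ wlen Sγ g + 1 := by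
  obtain ⟨l, hl, hlen, hp⟩ := exists_geodesic g
  have := wlen_le (g := g * s) (l := l ++ [s])
    (by intro x hx; rcases List.mem_append.1 hx with h|h
        exacts [hl x h, by simpa using (List.mem_singleton.1 h) ▸ hs])
    (by simp [hp])
  simpa [hlen] using this

end AuxLemmas

/-- With respect to `S_γ`: for all `g ≠ 1` and `s ∈ S_γ`, either `|sg| = |g| − 1` or
`|sg| = |g| + 1`, with `|sg| = |g| − 1` iff `g` has a geodesic spelling beginning
with `s⁻¹`; similarly `|gs| = |g| − 1` or `|gs| = |g| + 1`, with `|gs| = |g| − 1`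
iff `g` has a geodesic spelling ending with `s⁻¹`. -/
theorem extending_corollary (g : F2) (hg : g ≠ 1) (s : F2) (hs : s ∈ Sγ) :
    (wlen Sγ (s * g) + 1 = wlen Sγ g ∨ wlen Sγ (s * g) = wlen Sγ g + 1) ∧
    (wlen Sγ (s * g) + 1 = wlen Sγ g ↔
      ∃ l : List F2, (∀ x ∈ l, x ∈ Sγ) ∧ l.prod = g ∧ l.length = wlen Sγ g ∧
        l.head? = some s⁻¹) ∧
    (wlen Sγ (g * s) + 1 = wlen Sγ g ∨ wlen Sγ (g * s) = wlen Sγ g + 1) ∧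
    (wlen Sγ (g * s) + 1 = wlen Sγ g ↔
      ∃ l : List F2, (∀ x ∈ l, x ∈ Sγ) ∧ l.prod = g ∧ l.length = wlen Sγ g ∧
        l.getLast? = some s⁻¹) := by
  have hsi : s⁻¹ ∈ Sγ := inv_mem_Sγ hs
  -- basic inequalities
  have h1 : wlen Sγ (s * g) ≤ wlen Sγ g + 1 := wlen_mul_le hs g
  have h2 : wlen Sγ g ≤ wlen Sγ (s * g) + 1 := by
    have := wlen_mul_le hsi (s * g)
    simpa [mul_assoc] using this
  have hne : wlen Sγ (s * g) ≠ wlen Sγ g := wlen_ne_of_mul hs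
  have h1' : wlen Sγ (g * s) ≤ wlen Sγ g + 1 := wlen_mul_le_right hs g
  have h2' : wlen Sγ g ≤ wlen Sγ (g * s) + 1 := by
    have := wlen_mul_le_right hsi (g * s)
    simpa [mul_assoc] using this
  have hne' : wlen Sγ (g * s) ≠ wlen Sγ g := wlen_ne_of_mul_right hs
  refine ⟨by omega, ?_, by omega, ?_⟩
  · constructor
    · intro hlt
      obtain ⟨l, hl, hlen, hp⟩ := exists_geodesic (s * g)
      refine ⟨s⁻¹ :: l, ?_, ?_, ?_, rfl⟩
      · intro x hx
        rcases List.mem_cons.1 hx with h|h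
        exacts [h ▸ hsi, hl x h]
      · simp [hp, ← mul_assoc]
      · simp [hlen, hlt]
    · rintro ⟨l, hl, hp, hlen, hhead⟩
      rcases l with _ | ⟨x, t⟩
      · simp at hhead
      · have hx : x = s⁻¹ := by simpa using hhead
        subst hx
        have hpt : t.prod = s * g := by
          have : s⁻¹ * t.prod = g := by simpa using hp
          rw [← this]; group
        have h3 : wlen Sγ (s * g) ≤ t.length :=
          wlen_le (fun y hy => hl y (List.mem_cons_of_mem _ hy)) hpt
        have h4 : t.length + 1 = wlen Sγ g := by simpa using hlen
        omega
  · constructor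
    · intro hlt
      obtain ⟨l, hl, hlen, hp⟩ := exists_geodesic (g * s)
      refine ⟨l ++ [s⁻¹], ?_, ?_, ?_, ?_⟩
      · intro x hx
        rcases List.mem_append.1 hx with h|h
        exacts [hl x h, by simpa using (List.mem_singleton.1 h) ▸ hsi]
      · simp [hp, mul_assoc]
      · simp [hlen, hlt]
      · simp
    · rintro ⟨l, hl, hp, hlen, hlast⟩
      have hrev : l.reverse.head? = some s⁻¹ := by
        rwa [List.head?_reverse]
      rcases hr : l.reverse with _ | ⟨x, t⟩
      · rw [hr] at hrev; simp at hrev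
      · rw [hr] at hrev
        have hx : x = s⁻¹ := by simpa using hrev
        subst hx
        have hl2 : l = t.reverse ++ [s⁻¹] := by
          have := congrArg List.reverse hr
          simpa using this
        have hpt : t.reverse.prod = g * s := by
          have : t.reverse.prod * s⁻¹ = g := by
            rw [hl2] at hp; simpa using hp
          rw [← this]; group
        have h3 : wlen Sγ (g * s) ≤ t.reverse.length := by
          refine wlen_le (fun y hy => hl y ?_) hpt
          rw [hl2]; exact List.mem_append_left _ hy
        have h4 : t.reverse.length + 1 = wlen Sγ g := by
          rw [hl2] at hlen; simpa using hlen
        omega
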